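/- Let M be a homogeneous n-graph, a ∈ M and s a colour. Then the set R_s(a), with the colouring induced from M, is itself homogeneous: every colour-preserving bijection between two finite subsets of R_s(a) extends to a colour-preserving permutation of R_s(a). -/

import Mathlib

/-!
Common definitions for edge-coloured graphs ("n-graphs").
`V` is the vertex set and `C` the set of colours; `c x y` is the colour of the
pair `{x, y}` (only meaningful for `x ≠ y`).
-/

variable {V C : Type*}

/-- The colouring `c` is symmetric. -/
def CSymm (c : V → V → C) : Prop :=
  ∀ x y : V, c x y = c y x

/-- Every colour is realised on some pair of distinct vertices. -/
def CAll (c : V → V → C) : Prop :=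
  ∀ i : C, ∃ x y : V, x ≠ y ∧ c x y = i

/-- `σ` is an automorphism of the edge-coloured graph `(V, c)`. -/
def CAuto (c : V → V → C) (σ : Equiv.Perm V) : Prop :=
  ∀ x y : V, x ≠ y → c (σ x) (σ y) = c x y

/-- Homogeneity: every colour-preserving injection defined on a finite set of
vertices (equivalently, every colour-preserving bijection between two finite
subsets) extends to an automorphism. -/
def CHom (c : V → V → C) : Prop :=
  ∀ (A : Finset V) (f : V → V), Set.InjOn f (↑A : Set V) →
    (∀ x ∈ A, ∀ y ∈ A, x ≠ y → c (f x) (f y) = c x y) →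
    ∃ σ : Equiv.Perm V, CAuto c σ ∧ ∀ x ∈ A, σ x = f x

/-- The automorphism group acts transitively on the vertices. -/
def CTrans (c : V → V → C) : Prop :=
  ∀ x y : V, ∃ σ : Equiv.Perm V, CAuto c σ ∧ σ x = y

/-- Primitivity: the automorphism group acts transitively, and the only
equivalence relations invariant under all automorphisms are equality and the
total relation. -/
def CPrim (c : V → V → C) : Prop :=
  CTrans c ∧ ∀ E : V → V → Prop, Equivalence E →
    (∀ σ : Equiv.Perm V, CAuto c σ → ∀ x y, E x y → E (σ x) (σ y)) →
    (∀ x y, E x y ↔ x = y) ∨ (∀ x y, E x y)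

/-- The `i`-coloured neighbourhood `R_i(a)`. -/
def CNbhd (c : V → V → C) (i : C) (a : V) : Set V :=
  {x | x ≠ a ∧ c a x = i}

/-- `X` is a clique in colour `i`. -/
def CClique (c : V → V → C) (i : C) (X : Set V) : Prop :=
  ∀ x ∈ X, ∀ y ∈ X, x ≠ y → c x y = i

/-- There is an `i`-coloured path with `k` edges from `x` to `y`
(a sequence of pairwise distinct vertices). -/
def CPath (c : V → V → C) (i : C) (x y : V) (k : ℕ) : Prop :=
  ∃ p : Fin (k + 1) → V, Function.Injective p ∧ p 0 = x ∧ p (Fin.last k) = y ∧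
    ∀ j : Fin k, c (p j.castSucc) (p j.succ) = i

/-- in a homogeneous `n`-graph, each neighbourhood `R_s(a)` with
its induced colouring is itself homogeneous. -/
theorem stmt4 {V : Type*} {n : ℕ} (hn : 2 ≤ n) (c : V → V → Fin n)
    (hsymm : CSymm c) (hall : CAll c) (hhom : CHom c)
    (a : V) (s : Fin n) :
    CHom (fun x y : ↥(CNbhd c s a) => c x.1 y.1) := by
  classical
  intro A f hinj hcol
  -- Extend f to a function g on V fixing a.
  set g : V → V := fun v => if h : ∃ x ∈ A, (x : V) = v then (f h.choose).1 else v with hg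
  have hga : g a = a := by
    simp only [hg]
    rw [dif_neg]
    rintro ⟨x, hxA, hxv⟩
    exact x.2.1 hxv
  have hgx : ∀ x ∈ A, g (x : V) = (f x).1 := by
    intro x hx
    have h : ∃ y ∈ A, (y : V) = (x : V) := ⟨x, hx, rfl⟩
    simp only [hg]
    rw [dif_pos h]
    have := h.choose_spec
    have hxe : h.choose = x := Subtype.ext this.2
    rw [hxe]
  set A' : Finset V := insert a (A.image Subtype.val) with hA'
  have hmemA' : ∀ x ∈ A, (x : V) ∈ A' := by
    intro x hx
    exact Finset.mem_insert_of_mem (Finset.mem_image_of_mem _ hx)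
  have hInj : Set.InjOn g (↑A' : Set V) := by
    intro u hu v hv huv
    simp only [hA', Finset.coe_insert, Set.mem_insert_iff, Finset.coe_image,
      Set.mem_image, Finset.mem_coe] at hu hv
    rcases hu with rfl | ⟨x, hx, rfl⟩ <;> rcases hv with rfl | ⟨y, hy, rfl⟩
    · rfl
    · rw [hga, hgx y hy] at huv; exact absurd huv.symm (f y).2.1
    · rw [hga, hgx x hx] at huv; exact absurd huv (f x).2.1
    · rw [hgx x hx, hgx y hy] at huv
      exact congrArg Subtype.val (hinj hx hy (Subtype.ext huv))
  have hCol : ∀ u ∈ A', ∀ v ∈ A', u ≠ v → c (g u) (g v) = c u v := by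
    intro u hu v hv huv
    simp only [hA', Finset.mem_insert, Finset.mem_image] at hu hv
    rcases hu with rfl | ⟨x, hx, rfl⟩ <;> rcases hv with rfl | ⟨y, hy, rfl⟩
    · exact absurd rfl huv
    · rw [hga, hgx y hy, (f y).2.2, y.2.2]
    · rw [hga, hgx x hx, hsymm ((f x).1), hsymm x.1, (f x).2.2, x.2.2]
    · rw [hgx x hx, hgx y hy]
      exact hcol x hx y hy (fun h => huv (congrArg Subtype.val h))
  obtain ⟨σ, hσauto, hσeq⟩ := hhom A' g hInj hCol
  have hσa : σ a = a := by rw [hσeq a (Finset.mem_insert_self _ _), hga]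
  have hp : ∀ v : V, v ∈ CNbhd c s a ↔ σ v ∈ CNbhd c s a := by
    intro v
    constructor
    · rintro ⟨hva, hcv⟩
      refine ⟨fun h => hva (σ.injective (h.trans hσa.symm)), ?_⟩
      calc c a (σ v) = c (σ a) (σ v) := by rw [hσa]
        _ = c a v := hσauto a v (Ne.symm hva)
        _ = s := hcv
    · rintro ⟨hva, hcv⟩
      have hne : v ≠ a := fun h => hva (by rw [h, hσa])
      refine ⟨hne, ?_⟩
      calc c a v = c (σ a) (σ v) := (hσauto a v (Ne.symm hne)).symm
        _ = c a (σ v) := by rw [hσa]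
        _ = s := hcv
  refine ⟨σ.subtypePerm (fun v => (hp v).symm), ?_, ?_⟩
  · intro x y hxy
    exact hσauto x.1 y.1 (fun h => hxy (Subtype.ext h))
  · intro x hx
    apply Subtype.ext
    show σ x.1 = (f x).1
    rw [hσeq x.1 (hmemA' x hx), hgx x hx]
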